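/- Let N ≥ 1 and let u₁ : ℝ^N → ℂ be integrable with ∫_{ℝ^N}|ŵ₁(ξ)|² dξ < ∞, where ŵ₁(ξ) = ∫_{ℝ^N} u₁(x) e^{-i⟨x,ξ⟩} dx. Set P₁ = ∫_{ℝ^N} u₁(x) dx, û(ξ,t) = (4/π) e^{-t log(1+|ξ|²)/2} sin(πt/4) ŵ₁(ξ), and F₃(ξ,t) = (4/π) P₁ e^{-t log(1+|ξ|²)/2} sin( t √(log(1 + |ξ|²)) ). Then there exist constants C > 0 and η > 0 depending only on N, and T > 0, such that for all t ≥ T: ∫_{|ξ| ≥ 1} |û(ξ,t) - F₃(ξ,t)|² dξ ≤ C ( ∫_{ℝ^N}|ŵ₁(ξ)|² dξ + |P₁|² ) e^{-η t}. -/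

import Mathlib

open MeasureTheory

/-- Non-normalized Fourier transform `ŵ(ξ) = ∫ u(x) e^{-i⟨x,ξ⟩} dx`. -/
noncomputable def ft {N : ℕ} (u : EuclideanSpace ℝ (Fin N) → ℂ)
    (ξ : EuclideanSpace ℝ (Fin N)) : ℂ :=
  ∫ x, u x * Complex.exp (-Complex.I * ((inner ℝ x ξ : ℝ) : ℂ))

/-- The explicit Fourier-space solution with zero initial position and
initial velocity `w₁ ξ`. -/
noncomputable def uhat0 {N : ℕ} (w₁ : EuclideanSpace ℝ (Fin N) → ℂ)
    (ξ : EuclideanSpace ℝ (Fin N)) (t : ℝ) : ℂ :=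
  ((4 / Real.pi : ℝ) : ℂ) * (Real.exp (-(t * Real.log (1 + ‖ξ‖ ^ 2)) / 2) : ℂ)
    * (Real.sin (Real.pi * t / 4) : ℂ) * w₁ ξ

/-- The leading profile `F₃`. -/
noncomputable def F₃ {N : ℕ} (P₁ : ℂ) (ξ : EuclideanSpace ℝ (Fin N)) (t : ℝ) : ℂ :=
  ((4 / Real.pi : ℝ) : ℂ) * P₁ * (Real.exp (-(t * Real.log (1 + ‖ξ‖ ^ 2)) / 2) : ℂ)
    * (Real.sin (t * Real.sqrt (Real.log (1 + ‖ξ‖ ^ 2))) : ℂ)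

set_option maxHeartbeats 1000000 in
lemma key_bound {N : ℕ} (hN : 1 ≤ N) (w : EuclideanSpace ℝ (Fin N) → ℂ) (P : ℂ)
    (ξ : EuclideanSpace ℝ (Fin N)) (hξ : 1 ≤ ‖ξ‖) (t : ℝ) (ht : (N : ℝ) ≤ t) :
    ‖uhat0 w ξ t - F₃ P ξ t‖ ^ 2 ≤
      Real.exp (-Real.log 2 * t) *
        (2 * (4 / Real.pi) ^ 2 * ‖w ξ‖ ^ 2 +
         2 * (4 / Real.pi) ^ 2 * ‖P‖ ^ 2 * 4 ^ N * (1 + ‖ξ‖) ^ (-(2 * (N : ℝ)))) := by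
  have hπ : 0 < Real.pi := Real.pi_pos
  have hA : 0 < 4 / Real.pi := by positivity
  set a := ‖ξ‖ with ha
  set L := Real.log (1 + ‖ξ‖ ^ 2) with hLdef
  set E := Real.exp (-(t * L) / 2) with hEdef
  have hL : Real.log 2 ≤ L := Real.log_le_log (by norm_num) (by nlinarith)
  have hlog2 : 0 < Real.log 2 := Real.log_pos (by norm_num)
  have hNt : (0:ℝ) ≤ (N:ℝ) := Nat.cast_nonneg N
  have ht0 : 0 ≤ t := le_trans hNt ht
  have hE : 0 < E := Real.exp_pos _
  have hu : ‖uhat0 w ξ t‖ ≤ (4 / Real.pi) * E * ‖w ξ‖ := by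
    have heq : ‖uhat0 w ξ t‖ = (4 / Real.pi) * E * |Real.sin (Real.pi * t / 4)| * ‖w ξ‖ := by
      simp only [uhat0, norm_mul, Complex.norm_real, Real.norm_eq_abs, Real.abs_exp,
        abs_of_pos hA, hEdef, hLdef]
    rw [heq]
    have hs : |Real.sin (Real.pi * t / 4)| ≤ 1 :=
      abs_le.mpr ⟨Real.neg_one_le_sin _, Real.sin_le_one _⟩
    nlinarith [mul_nonneg (mul_nonneg (mul_pos hA hE).le (norm_nonneg (w ξ)))
      (sub_nonneg.2 hs)]
  have hF : ‖F₃ P ξ t‖ ≤ (4 / Real.pi) * ‖P‖ * E := by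
    have heq : ‖F₃ P ξ t‖ = (4 / Real.pi) * ‖P‖ * E * |Real.sin (t * Real.sqrt L)| := by
      simp only [F₃, norm_mul, Complex.norm_real, Real.norm_eq_abs, Real.abs_exp,
        abs_of_pos hA, hEdef, hLdef]
    rw [heq]
    have hs : |Real.sin (t * Real.sqrt L)| ≤ 1 :=
      abs_le.mpr ⟨Real.neg_one_le_sin _, Real.sin_le_one _⟩
    nlinarith [mul_nonneg (mul_nonneg (mul_nonneg hA.le (norm_nonneg P)) hE.le)
      (sub_nonneg.2 hs)]
  have hEsq : E ^ 2 = Real.exp (-(t * L)) := by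
    rw [sq, ← Real.exp_add]; congr 1; ring
  have hu2 : ‖uhat0 w ξ t‖ ^ 2 ≤ (4 / Real.pi) ^ 2 * Real.exp (-(t * L)) * ‖w ξ‖ ^ 2 := by
    have h := pow_le_pow_left₀ (norm_nonneg _) hu 2
    calc ‖uhat0 w ξ t‖ ^ 2 ≤ ((4 / Real.pi) * E * ‖w ξ‖) ^ 2 := h
      _ = (4 / Real.pi) ^ 2 * E ^ 2 * ‖w ξ‖ ^ 2 := by ring
      _ = (4 / Real.pi) ^ 2 * Real.exp (-(t * L)) * ‖w ξ‖ ^ 2 := by rw [hEsq]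
  have hF2 : ‖F₃ P ξ t‖ ^ 2 ≤ (4 / Real.pi) ^ 2 * ‖P‖ ^ 2 * Real.exp (-(t * L)) := by
    have h := pow_le_pow_left₀ (norm_nonneg _) hF 2
    calc ‖F₃ P ξ t‖ ^ 2 ≤ ((4 / Real.pi) * ‖P‖ * E) ^ 2 := h
      _ = (4 / Real.pi) ^ 2 * ‖P‖ ^ 2 * E ^ 2 := by ring
      _ = (4 / Real.pi) ^ 2 * ‖P‖ ^ 2 * Real.exp (-(t * L)) := by rw [hEsq]
  have hexp1 : Real.exp (-(t * L)) ≤ Real.exp (-Real.log 2 * t) := by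
    apply Real.exp_le_exp.2
    nlinarith [mul_le_mul_of_nonneg_left hL ht0]
  have hexp2 : Real.exp (-(t * L)) ≤
      Real.exp (-Real.log 2 * t) * (4 ^ N * (1 + a) ^ (-(2 * (N : ℝ)))) := by
    have hsplit : Real.exp (-(t * L)) =
        Real.exp (-((t - N) * L)) * Real.exp (-(N : ℝ) * L) := by
      rw [← Real.exp_add]; congr 1; ring
    have h1 : Real.exp (-((t - N) * L)) ≤ Real.exp (-((t - N) * Real.log 2)) := by
      apply Real.exp_le_exp.2
      nlinarith [mul_le_mul_of_nonneg_left hL (sub_nonneg.2 ht)]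
    have h2 : Real.exp (-((t - N) * Real.log 2)) = Real.exp (-Real.log 2 * t) * 2 ^ N := by
      rw [show -((t - N) * Real.log 2) = -Real.log 2 * t + (N : ℝ) * Real.log 2 by ring,
        Real.exp_add, Real.exp_nat_mul, Real.exp_log two_pos]
    have hb : (0:ℝ) < 1 + a ^ 2 := by positivity
    have hc : (0:ℝ) < 1 + a := by positivity
    have h3eq : Real.exp (-(N : ℝ) * L) = (1 + a ^ 2) ^ (-(N : ℝ)) := by
      rw [Real.rpow_def_of_pos hb]; congr 1; rw [hLdef]; ring
    have hkey : (1 + a) ^ (2 * N) ≤ 2 ^ N * (1 + a ^ 2) ^ N := by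
      calc (1 + a) ^ (2 * N) = ((1 + a) ^ 2) ^ N := by rw [pow_mul]
        _ ≤ (2 * (1 + a ^ 2)) ^ N := pow_le_pow_left₀ (by positivity)
            (by nlinarith [sq_nonneg (1 - a)]) N
        _ = 2 ^ N * (1 + a ^ 2) ^ N := mul_pow _ _ _
    have hbp : (0:ℝ) < (1 + a ^ 2) ^ N := by positivity
    have hcp : (0:ℝ) < (1 + a) ^ (2 * N) := by positivity
    have h3 : Real.exp (-(N : ℝ) * L) ≤ 2 ^ N * (1 + a) ^ (-(2 * (N : ℝ))) := by
      have e1 : ((1 + a ^ 2 : ℝ)) ^ (-(N : ℝ)) = ((1 + a ^ 2) ^ N)⁻¹ := by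
        rw [← Real.rpow_natCast (1 + a ^ 2) N, ← Real.rpow_neg hb.le]
      have e2 : ((1 + a : ℝ)) ^ (-(2 * (N : ℝ))) = ((1 + a) ^ (2 * N))⁻¹ := by
        rw [show -(2 * (N:ℝ)) = -(((2 * N : ℕ)) : ℝ) by push_cast; ring,
          ← Real.rpow_natCast (1 + a) (2 * N), ← Real.rpow_neg hc.le]
      rw [h3eq, e1, e2]
      have h' : (1:ℝ) / (1 + a ^ 2) ^ N ≤ 2 ^ N / (1 + a) ^ (2 * N) := by
        rw [div_le_div_iff₀ hbp hcp]; nlinarith [hkey]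
      simpa [one_div, div_eq_mul_inv] using h'
    calc Real.exp (-(t * L)) = Real.exp (-((t - N) * L)) * Real.exp (-(N : ℝ) * L) := hsplit
      _ ≤ Real.exp (-((t - N) * Real.log 2)) * (2 ^ N * (1 + a) ^ (-(2 * (N : ℝ)))) := by
          apply mul_le_mul h1 h3 (Real.exp_pos _).le (Real.exp_pos _).le
      _ = Real.exp (-Real.log 2 * t) * (4 ^ N * (1 + a) ^ (-(2 * (N : ℝ)))) := by
          rw [h2]
          have : (4:ℝ) ^ N = 2 ^ N * 2 ^ N := by
            rw [← mul_pow]; norm_num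
          rw [this]; ring
  have hX : (0:ℝ) ≤ (1 + a) ^ (-(2 * (N : ℝ))) := Real.rpow_nonneg (by positivity) _
  have h1 : ‖uhat0 w ξ t - F₃ P ξ t‖ ^ 2 ≤ 2 * ‖uhat0 w ξ t‖ ^ 2 + 2 * ‖F₃ P ξ t‖ ^ 2 := by
    have h0 : ‖uhat0 w ξ t - F₃ P ξ t‖ ^ 2 ≤ (‖uhat0 w ξ t‖ + ‖F₃ P ξ t‖) ^ 2 :=
      pow_le_pow_left₀ (norm_nonneg _) (norm_sub_le _ _) 2
    nlinarith [h0, sq_nonneg (‖uhat0 w ξ t‖ - ‖F₃ P ξ t‖)]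
  have hu3 : ‖uhat0 w ξ t‖ ^ 2 ≤ (4 / Real.pi) ^ 2 * Real.exp (-Real.log 2 * t) * ‖w ξ‖ ^ 2 := by
    refine hu2.trans ?_
    have := mul_le_mul_of_nonneg_left hexp1 (le_of_lt (by positivity : (0:ℝ) < (4 / Real.pi) ^ 2))
    nlinarith [sq_nonneg ‖w ξ‖]
  have hF3 : ‖F₃ P ξ t‖ ^ 2 ≤ (4 / Real.pi) ^ 2 * ‖P‖ ^ 2 *
      (Real.exp (-Real.log 2 * t) * (4 ^ N * (1 + a) ^ (-(2 * (N : ℝ))))) := by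
    refine hF2.trans ?_
    have h0 : (0:ℝ) ≤ (4 / Real.pi) ^ 2 * ‖P‖ ^ 2 := by positivity
    exact mul_le_mul_of_nonneg_left hexp2 h0
  nlinarith [h1, hu3, hF3]

set_option maxHeartbeats 1000000 in
/-- Theorem 3.4: high-frequency asymptotic profile estimate. -/
theorem stmt_16 (N : ℕ) (hN : 1 ≤ N)
    (u₁ : EuclideanSpace ℝ (Fin N) → ℂ)
    (h₁ : Integrable u₁)
    (hw₁ : Integrable (fun ξ : EuclideanSpace ℝ (Fin N) => ‖ft u₁ ξ‖ ^ 2)) :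
    ∃ C > (0 : ℝ), ∃ η > (0 : ℝ), ∃ T > (0 : ℝ), ∀ t : ℝ, T ≤ t →
      (∫ ξ in {ξ : EuclideanSpace ℝ (Fin N) | 1 ≤ ‖ξ‖},
        ‖uhat0 (ft u₁) ξ t - F₃ (∫ x, u₁ x) ξ t‖ ^ 2)
      ≤ C * ((∫ ξ : EuclideanSpace ℝ (Fin N), ‖ft u₁ ξ‖ ^ 2) + ‖∫ x, u₁ x‖ ^ 2)
          * Real.exp (-η * t) := by
  have hπ : 0 < Real.pi := Real.pi_pos
  set P : ℂ := ∫ x, u₁ x with hPdef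
  have hint : Integrable (fun ξ : EuclideanSpace ℝ (Fin N) =>
      (1 + ‖ξ‖) ^ (-(2 * (N : ℝ)))) := by
    apply integrable_one_add_norm
    rw [finrank_euclideanSpace_fin]
    have h1N : (1:ℝ) ≤ (N:ℝ) := by exact_mod_cast hN
    linarith
  set K : ℝ := ∫ ξ : EuclideanSpace ℝ (Fin N), (1 + ‖ξ‖) ^ (-(2 * (N : ℝ))) with hKdef
  have hK0 : 0 ≤ K := integral_nonneg fun ξ => Real.rpow_nonneg (by positivity) _
  set S : ℝ := ∫ ξ : EuclideanSpace ℝ (Fin N), ‖ft u₁ ξ‖ ^ 2 with hSdef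
  have hS0 : 0 ≤ S := integral_nonneg fun ξ => sq_nonneg _
  refine ⟨2 * (4 / Real.pi) ^ 2 + 2 * (4 / Real.pi) ^ 2 * 4 ^ N * K + 1, by positivity,
    Real.log 2, Real.log_pos (by norm_num), (N : ℝ),
    by exact_mod_cast Nat.lt_of_lt_of_le Nat.zero_lt_one hN, fun t ht => ?_⟩
  have hs : MeasurableSet {ξ : EuclideanSpace ℝ (Fin N) | 1 ≤ ‖ξ‖} :=
    (isClosed_le continuous_const continuous_norm).measurableSet
  have hGint : Integrable (fun ξ : EuclideanSpace ℝ (Fin N) =>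
      2 * (4 / Real.pi) ^ 2 * ‖ft u₁ ξ‖ ^ 2 +
        2 * (4 / Real.pi) ^ 2 * ‖P‖ ^ 2 * 4 ^ N * (1 + ‖ξ‖) ^ (-(2 * (N : ℝ)))) :=
    (hw₁.const_mul _).add (hint.const_mul _)
  have hmono : (∫ ξ in {ξ : EuclideanSpace ℝ (Fin N) | 1 ≤ ‖ξ‖},
        ‖uhat0 (ft u₁) ξ t - F₃ P ξ t‖ ^ 2)
      ≤ ∫ ξ in {ξ : EuclideanSpace ℝ (Fin N) | 1 ≤ ‖ξ‖},
          Real.exp (-Real.log 2 * t) *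
            (2 * (4 / Real.pi) ^ 2 * ‖ft u₁ ξ‖ ^ 2 +
              2 * (4 / Real.pi) ^ 2 * ‖P‖ ^ 2 * 4 ^ N * (1 + ‖ξ‖) ^ (-(2 * (N : ℝ)))) := by
    apply integral_mono_of_nonneg
    · exact Filter.Eventually.of_forall fun ξ => sq_nonneg _
    · exact ((hGint.const_mul _).restrict)
    · exact (ae_restrict_iff' hs).2 (Filter.Eventually.of_forall fun ξ hξ =>
        key_bound hN (ft u₁) P ξ hξ t ht)
  have h2 : (∫ ξ in {ξ : EuclideanSpace ℝ (Fin N) | 1 ≤ ‖ξ‖},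
          Real.exp (-Real.log 2 * t) *
            (2 * (4 / Real.pi) ^ 2 * ‖ft u₁ ξ‖ ^ 2 +
              2 * (4 / Real.pi) ^ 2 * ‖P‖ ^ 2 * 4 ^ N * (1 + ‖ξ‖) ^ (-(2 * (N : ℝ)))))
      = Real.exp (-Real.log 2 * t) * ∫ ξ in {ξ : EuclideanSpace ℝ (Fin N) | 1 ≤ ‖ξ‖},
            (2 * (4 / Real.pi) ^ 2 * ‖ft u₁ ξ‖ ^ 2 +
              2 * (4 / Real.pi) ^ 2 * ‖P‖ ^ 2 * 4 ^ N * (1 + ‖ξ‖) ^ (-(2 * (N : ℝ)))) :=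
    integral_const_mul _ _
  have h3 : (∫ ξ in {ξ : EuclideanSpace ℝ (Fin N) | 1 ≤ ‖ξ‖},
            (2 * (4 / Real.pi) ^ 2 * ‖ft u₁ ξ‖ ^ 2 +
              2 * (4 / Real.pi) ^ 2 * ‖P‖ ^ 2 * 4 ^ N * (1 + ‖ξ‖) ^ (-(2 * (N : ℝ)))))
      ≤ ∫ ξ : EuclideanSpace ℝ (Fin N),
            (2 * (4 / Real.pi) ^ 2 * ‖ft u₁ ξ‖ ^ 2 +
              2 * (4 / Real.pi) ^ 2 * ‖P‖ ^ 2 * 4 ^ N * (1 + ‖ξ‖) ^ (-(2 * (N : ℝ)))) :=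
    setIntegral_le_integral hGint (Filter.Eventually.of_forall fun ξ => by positivity)
  have h4 : (∫ ξ : EuclideanSpace ℝ (Fin N),
            (2 * (4 / Real.pi) ^ 2 * ‖ft u₁ ξ‖ ^ 2 +
              2 * (4 / Real.pi) ^ 2 * ‖P‖ ^ 2 * 4 ^ N * (1 + ‖ξ‖) ^ (-(2 * (N : ℝ)))))
      = 2 * (4 / Real.pi) ^ 2 * S + 2 * (4 / Real.pi) ^ 2 * ‖P‖ ^ 2 * 4 ^ N * K := by
    rw [integral_add (hw₁.const_mul _) (hint.const_mul _), integral_const_mul,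
      integral_const_mul]
  have h5 : 2 * (4 / Real.pi) ^ 2 * S + 2 * (4 / Real.pi) ^ 2 * ‖P‖ ^ 2 * 4 ^ N * K
      ≤ (2 * (4 / Real.pi) ^ 2 + 2 * (4 / Real.pi) ^ 2 * 4 ^ N * K + 1) * (S + ‖P‖ ^ 2) := by
    have h4N : (0:ℝ) < 4 ^ N := by positivity
    have hA2 : (0:ℝ) < 2 * (4 / Real.pi) ^ 2 := by positivity
    nlinarith [mul_nonneg hS0 hK0, mul_nonneg (sq_nonneg ‖P‖) hK0, sq_nonneg ‖P‖,
      mul_nonneg (mul_nonneg hA2.le h4N.le) (mul_nonneg hK0 hS0),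
      mul_nonneg hA2.le hS0, mul_nonneg hA2.le (sq_nonneg ‖P‖)]
  have hexp : (0:ℝ) < Real.exp (-Real.log 2 * t) := Real.exp_pos _
  calc (∫ ξ in {ξ : EuclideanSpace ℝ (Fin N) | 1 ≤ ‖ξ‖},
        ‖uhat0 (ft u₁) ξ t - F₃ P ξ t‖ ^ 2)
      ≤ Real.exp (-Real.log 2 * t) * ∫ ξ : EuclideanSpace ℝ (Fin N),
            (2 * (4 / Real.pi) ^ 2 * ‖ft u₁ ξ‖ ^ 2 +
              2 * (4 / Real.pi) ^ 2 * ‖P‖ ^ 2 * 4 ^ N * (1 + ‖ξ‖) ^ (-(2 * (N : ℝ)))) := by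
          refine (hmono.trans_eq h2).trans ?_
          exact mul_le_mul_of_nonneg_left h3 hexp.le
    _ ≤ Real.exp (-Real.log 2 * t) *
          ((2 * (4 / Real.pi) ^ 2 + 2 * (4 / Real.pi) ^ 2 * 4 ^ N * K + 1) * (S + ‖P‖ ^ 2)) := by
          rw [h4]
          exact mul_le_mul_of_nonneg_left h5 hexp.le
    _ = (2 * (4 / Real.pi) ^ 2 + 2 * (4 / Real.pi) ^ 2 * 4 ^ N * K + 1) * (S + ‖P‖ ^ 2) *
          Real.exp (-Real.log 2 * t) := by ring
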